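/- Let X be a simply connected topological space with a finite good open cover U = (U_μ)_{μ∈I}, i.e. every nonempty intersection of finitely many members of the cover is contractible. Then there exists a constant C₂ > 0, depending only on the cover U, such that for every ε > 0, every unital C*-algebra A, and every (ε,U)-flat unitary Čech 1-cocycle v = (v_{μν}) subordinate to U, there exist unitaries (u_μ)_{μ∈I} in A with ‖ u_μ·u_ν* − v_{μν}(x) ‖ < C₂·ε for all μ, ν ∈ I and all x ∈ U_μ ∩ U_ν. -/

import Mathlib

namespace FlatLoctriv

variable {I X A : Type*}

/-- Ordered product of transition elements `w (c 0) (c 1) * ⋯ * w (c (n-1)) (c n)`. -/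
def prodW [Monoid A] (w : I → I → A) (c : ℕ → I) : ℕ → A
  | 0 => 1
  | n+1 => prodW w c n * w (c n) (c (n+1))

/-- Capped transport along a word. -/
def cT [Monoid A] (w : I → I → A) (a b : I) (c : ℕ → I) (n : ℕ) : A :=
  w a (c 0) * prodW w c n * w (c n) b

lemma prodW_congr [Monoid A] (w : I → I → A) {c c' : ℕ → I} :
    ∀ n, (∀ m ≤ n, c m = c' m) → prodW w c n = prodW w c' n
  | 0, h => by simp only [prodW]
  | n+1, h => by
      simp only [prodW, prodW_congr w n (fun m hm => h m (hm.trans n.le_succ)),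
        h n n.le_succ, h (n+1) le_rfl]

lemma prodW_tail_one [Monoid A] (w : I → I → A) (c : ℕ → I) {a : ℕ} :
    ∀ {b : ℕ}, a ≤ b → (∀ m, a ≤ m → m < b → w (c m) (c (m+1)) = 1) →
      prodW w c b = prodW w c a := by
  intro b
  induction b with
  | zero => intro h _; exact (Nat.le_zero.mp h) ▸ rfl
  | succ n ih =>
      intro hab h
      rcases eq_or_lt_of_le hab with rfl | hlt
      · rfl
      · have han : a ≤ n := Nat.lt_succ_iff.mp hlt
        rw [prodW, h n han n.lt_succ_self, mul_one,
          ih han fun m hm hm' => h m hm (hm'.trans n.lt_succ_self)]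

lemma prodW_refine_aux [Monoid A] (w : I → I → A) (c : ℕ → I) {k n : ℕ} (hk : 0 < k)
    (hone : ∀ j ≤ n, w (c j) (c j) = 1) :
    ∀ m, m < k * (n+1) → prodW w (fun i => c (i / k)) m = prodW w c (m / k) := by
  intro m
  induction m with
  | zero =>
      intro _
      rw [Nat.zero_div]
      rw [show prodW w (fun i => c (i / k)) 0 = 1 from rfl, show prodW w c 0 = 1 from rfl]
  | succ m ih =>
      intro hm
      have hm' : m < k * (n+1) := (Nat.lt_succ_self m).trans hm
      rw [prodW, ih hm']
      by_cases hdvd : k ∣ m + 1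
      · rw [Nat.succ_div_of_dvd hdvd, prodW]
      · have h3 : (m+1) / k = m / k := by simp [Nat.succ_div, hdvd]
        have hjn : m / k ≤ n := by
          have := (Nat.div_lt_iff_lt_mul hk).mpr (by rw [Nat.mul_comm] at hm'; exact hm')
          omega
        show _ * w (c (m / k)) (c ((m+1) / k)) = _
        rw [h3, hone _ hjn, mul_one]

lemma div_pred_mul {k n : ℕ} (hk : 0 < k) : (k * (n+1) - 1) / k = n := by
  have h2 : k * (n+1) - 1 = (k-1) + k * n := by
    rw [Nat.mul_succ]
    have := hk
    set t := k * n
    omega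
  rw [h2, Nat.add_mul_div_left _ _ hk, Nat.div_eq_of_lt (by omega), Nat.zero_add]

lemma prodW_refine [Monoid A] (w : I → I → A) (c : ℕ → I) {k n : ℕ} (hk : 0 < k)
    (hone : ∀ j ≤ n, w (c j) (c j) = 1) :
    prodW w (fun i => c (i / k)) (k * (n+1) - 1) = prodW w c n := by
  have h1 : k * (n+1) - 1 < k * (n+1) := Nat.sub_lt (Nat.mul_pos hk n.succ_pos) one_pos
  rw [prodW_refine_aux w c hk hone _ h1, div_pred_mul hk]

lemma cT_refine [Monoid A] (w : I → I → A) (a b : I) (c : ℕ → I) {k n : ℕ} (hk : 0 < k)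
    (hone : ∀ j ≤ n, w (c j) (c j) = 1) :
    cT w a b (fun i => c (i / k)) (k * (n+1) - 1) = cT w a b c n := by
  unfold cT
  rw [prodW_refine w c hk hone]
  simp only [Nat.zero_div, div_pred_mul hk]

lemma prodW_mem_unitary [Monoid A] [StarMul A] (w : I → I → A) (c : ℕ → I) :
    ∀ n, (∀ m < n, w (c m) (c (m+1)) ∈ unitary A) → prodW w c n ∈ unitary A
  | 0, _ => one_mem _
  | n+1, h => mul_mem (prodW_mem_unitary w c n fun m hm => h m (hm.trans n.lt_succ_self))
      (h n n.lt_succ_self)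

/-- The transport along the composite word `γ_μ · (inside U μ) · (inside U ν)`
equals `t μ * w μ ν`. -/
lemma cT_eword [Monoid A] (w : I → I → A) (μ₀ μ ν : I) (cw : ℕ → I) {Nμ : ℕ} (hNμ : 0 < Nμ)
    (hone : ∀ j ≤ Nμ - 1, w (cw j) (cw j) = 1) (honeμ : w μ μ = 1) (honeν : w ν ν = 1) :
    cT w μ₀ ν (fun i => if i < 2*Nμ then cw (i/2) else if i < 3*Nμ then μ else ν) (4*Nμ - 1)
      = cT w μ₀ μ cw (Nμ - 1) * w μ ν := by
  set ew : ℕ → I := fun i => if i < 2*Nμ then cw (i/2) else if i < 3*Nμ then μ else ν with hew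
  have hA : prodW w ew (2*Nμ-1) = prodW w cw (Nμ-1) := by
    have h1 : prodW w ew (2*Nμ-1) = prodW w (fun i => cw (i/2)) (2*Nμ-1) := by
      refine prodW_congr w _ fun m hm => ?_
      have : m < 2*Nμ := by omega
      simp only [hew, if_pos this]
    rw [h1]
    have h2 : 2 * ((Nμ-1)+1) - 1 = 2*Nμ - 1 := by omega
    have := prodW_refine w cw (k := 2) (n := Nμ - 1) two_pos hone
    rw [h2] at this
    exact this
  have hB : prodW w ew (2*Nμ) = prodW w cw (Nμ-1) * w (cw (Nμ-1)) μ := by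
    have h1 : 2*Nμ = (2*Nμ-1)+1 := by omega
    rw [h1, prodW, ← h1, hA]
    have h2 : ew (2*Nμ-1) = cw (Nμ-1) := by
      have hlt : 2*Nμ-1 < 2*Nμ := by omega
      have hdiv : (2*Nμ-1)/2 = Nμ-1 := by omega
      simp only [hew, if_pos hlt, hdiv]
    have h3 : ew (2*Nμ) = μ := by
      have h4 : ¬ (2*Nμ < 2*Nμ) := lt_irrefl _
      have h5 : 2*Nμ < 3*Nμ := by omega
      simp only [hew, if_neg h4, if_pos h5]
    rw [h2, h3]
  have hC : prodW w ew (3*Nμ-1) = prodW w ew (2*Nμ) := by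
    refine prodW_tail_one w ew (by omega) fun m hm hm' => ?_
    have e1 : ew m = μ := by
      have : ¬ (m < 2*Nμ) := by omega
      have h5 : m < 3*Nμ := by omega
      simp only [hew, if_neg this, if_pos h5]
    have e2 : ew (m+1) = μ := by
      have : ¬ (m+1 < 2*Nμ) := by omega
      have h5 : m+1 < 3*Nμ := by omega
      simp only [hew, if_neg this, if_pos h5]
    rw [e1, e2, honeμ]
  have hD : prodW w ew (3*Nμ) = prodW w ew (3*Nμ-1) * w μ ν := by
    have h1 : 3*Nμ = (3*Nμ-1)+1 := by omega
    rw [h1, prodW, ← h1]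
    have e1 : ew (3*Nμ-1) = μ := by
      have h4 : ¬ (3*Nμ-1 < 2*Nμ) := by omega
      have h5 : 3*Nμ-1 < 3*Nμ := by omega
      simp only [hew, if_neg h4, if_pos h5]
    have e2 : ew (3*Nμ) = ν := by
      have h4 : ¬ (3*Nμ < 2*Nμ) := by omega
      have h5 : ¬ (3*Nμ < 3*Nμ) := lt_irrefl _
      simp only [hew, if_neg h4, if_neg h5]
    rw [e1, e2]
  have hEe : prodW w ew (4*Nμ-1) = prodW w ew (3*Nμ) := by
    refine prodW_tail_one w ew (by omega) fun m hm hm' => ?_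
    have e1 : ew m = ν := by
      have h4 : ¬ (m < 2*Nμ) := by omega
      have h5 : ¬ (m < 3*Nμ) := by omega
      simp only [hew, if_neg h4, if_neg h5]
    have e2 : ew (m+1) = ν := by
      have h4 : ¬ (m+1 < 2*Nμ) := by omega
      have h5 : ¬ (m+1 < 3*Nμ) := by omega
      simp only [hew, if_neg h4, if_neg h5]
    rw [e1, e2, honeν]
  have hlast : ew (4*Nμ-1) = ν := by
    have h4 : ¬ (4*Nμ-1 < 2*Nμ) := by omega
    have h5 : ¬ (4*Nμ-1 < 3*Nμ) := by omega
    simp only [hew, if_neg h4, if_neg h5]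
  have hzero : ew 0 = cw 0 := by
    have h4 : 0 < 2*Nμ := by omega
    simp only [hew, if_pos h4, Nat.zero_div]
  unfold cT
  rw [hlast, hzero, hEe, hD, hC, hB, honeν, mul_one]
  rw [mul_assoc, mul_assoc, mul_assoc]

section core
variable [NormedRing A] [StarRing A] [CStarRing A]

/-- Key comparison estimate between capped transports of two interleaving words. -/
lemma core (ε : ℝ) (U : I → Set X) (w : I → I → A)
    (hunit : ∀ a b : I, (U a ∩ U b).Nonempty → w a b ∈ unitary A)
    (htri : ∀ a b c : I, (U a ∩ U b ∩ U c).Nonempty → ‖w a b * w b c - w a c‖ ≤ 3*ε)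
    (a b : I) (n : ℕ) (c c' : ℕ → I)
    (h0 : (U a ∩ U (c 0) ∩ U (c' 0)).Nonempty)
    (hmid : ∀ m < n, (U (c m) ∩ U (c' m) ∩ (U (c (m+1)) ∩ U (c' (m+1)))).Nonempty)
    (h1 : (U (c n) ∩ U (c' n) ∩ U b).Nonempty) :
    ‖cT w a b c n - cT w a b c' n‖ ≤ (6*n+6)*ε := by
  have hstep : ∀ m < n, (U (c m) ∩ U (c (m+1))).Nonempty := by
    intro m hm; obtain ⟨x, hx⟩ := hmid m hm; exact ⟨x, hx.1.1, hx.2.1⟩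
  have hstep' : ∀ m < n, (U (c' m) ∩ U (c' (m+1))).Nonempty := by
    intro m hm; obtain ⟨x, hx⟩ := hmid m hm; exact ⟨x, hx.1.2, hx.2.2⟩
  have hc0 : (U a ∩ U (c 0)).Nonempty := by
    obtain ⟨x, hx⟩ := h0; exact ⟨x, hx.1.1, hx.1.2⟩
  have hc0' : (U a ∩ U (c' 0)).Nonempty := by
    obtain ⟨x, hx⟩ := h0; exact ⟨x, hx.1.1, hx.2⟩
  have hE : ∀ m ≤ n, w a (c 0) * prodW w c m ∈ unitary A := by
    intro m hm
    exact mul_mem (hunit _ _ hc0)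
      (prodW_mem_unitary w c m fun j hj => hunit _ _ (hstep j (lt_of_lt_of_le hj hm)))
  have claim : ∀ m ≤ n,
      ‖w a (c 0) * prodW w c m * w (c m) (c' m) - w a (c' 0) * prodW w c' m‖
        ≤ (6*m+3)*ε := by
    intro m
    induction m with
    | zero =>
        intro _
        have : ‖w a (c 0) * w (c 0) (c' 0) - w a (c' 0)‖ ≤ 3 * ε := htri a (c 0) (c' 0) h0
        simpa [prodW, mul_assoc] using this
    | succ m ih =>
        intro hm
        have hm' : m ≤ n := (Nat.le_succ m).trans hm
        have hmlt : m < n := Nat.lt_of_succ_le hm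
        set E := w a (c 0) * prodW w c m with hEdef
        set E' := w a (c' 0) * prodW w c' m with hE'def
        have hEu : E ∈ unitary A := hE m hm'
        have key :
            w a (c 0) * prodW w c (m+1) * w (c (m+1)) (c' (m+1))
              - w a (c' 0) * prodW w c' (m+1)
            = E * (w (c m) (c (m+1)) * w (c (m+1)) (c' (m+1)) - w (c m) (c' (m+1)))
              + E * (w (c m) (c' (m+1)) - w (c m) (c' m) * w (c' m) (c' (m+1)))
              + (E * w (c m) (c' m) - E') * w (c' m) (c' (m+1)) := by
          show w a (c 0) * (prodW w c m * w (c m) (c (m+1))) * w (c (m+1)) (c' (m+1))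
              - w a (c' 0) * (prodW w c' m * w (c' m) (c' (m+1))) = _
          rw [hEdef, hE'def]
          noncomm_ring
        rw [key]
        have t1 : ‖E * (w (c m) (c (m+1)) * w (c (m+1)) (c' (m+1)) - w (c m) (c' (m+1)))‖ ≤ 3*ε := by
          rw [CStarRing.norm_mem_unitary_mul _ hEu]
          refine htri _ _ _ ?_
          obtain ⟨x, hx⟩ := hmid m hmlt
          exact ⟨x, ⟨hx.1.1, hx.2.1⟩, hx.2.2⟩
        have t2 : ‖E * (w (c m) (c' (m+1)) - w (c m) (c' m) * w (c' m) (c' (m+1)))‖ ≤ 3*ε := by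
          rw [CStarRing.norm_mem_unitary_mul _ hEu, ← norm_neg]
          simp only [neg_sub]
          refine htri _ _ _ ?_
          obtain ⟨x, hx⟩ := hmid m hmlt
          exact ⟨x, ⟨hx.1.1, hx.1.2⟩, hx.2.2⟩
        have t3 : ‖(E * w (c m) (c' m) - E') * w (c' m) (c' (m+1))‖ ≤ (6*m+3)*ε := by
          rw [CStarRing.norm_mul_mem_unitary _ (hunit _ _ (hstep' m hmlt))]
          exact ih hm'
        refine le_trans (norm_add₃_le) (le_trans (add_le_add (add_le_add t1 t2) t3) (le_of_eq ?_))
        push_cast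
        ring
  have hEn := hE n le_rfl
  have key2 : cT w a b c n - cT w a b c' n
      = (w a (c 0) * prodW w c n) * (w (c n) b - w (c n) (c' n) * w (c' n) b)
        + (w a (c 0) * prodW w c n * w (c n) (c' n) - w a (c' 0) * prodW w c' n) * w (c' n) b := by
    unfold cT; noncomm_ring
  rw [key2]
  have hb' : (U (c' n) ∩ U b).Nonempty := by
    obtain ⟨x, hx⟩ := h1; exact ⟨x, hx.1.2, hx.2⟩
  have t1 : ‖(w a (c 0) * prodW w c n) * (w (c n) b - w (c n) (c' n) * w (c' n) b)‖ ≤ 3*ε := by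
    rw [CStarRing.norm_mem_unitary_mul _ hEn, ← norm_neg]
    simp only [neg_sub]
    exact htri _ _ _ h1
  have t2 : ‖(w a (c 0) * prodW w c n * w (c n) (c' n) - w a (c' 0) * prodW w c' n) * w (c' n) b‖
      ≤ (6*n+3)*ε := by
    rw [CStarRing.norm_mul_mem_unitary _ (hunit _ _ hb')]
    exact claim n le_rfl
  refine le_trans (norm_add_le _ _) (le_trans (add_le_add t1 t2) (le_of_eq ?_))
  ring

end core

section topo
variable [TopologicalSpace X]

noncomputable def ptI (m N : ℕ) : unitInterval := Set.projIcc 0 1 zero_le_one ((m:ℝ)/N)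

lemma ptI_coe {m N : ℕ} (h : m ≤ N) : (ptI m N : ℝ) = (m:ℝ)/N := by
  have hmem : (m:ℝ)/N ∈ Set.Icc (0:ℝ) 1 := by
    constructor
    · positivity
    · rcases Nat.eq_zero_or_pos N with rfl | hN
      · interval_cases m
        simp
      · rw [div_le_one (by exact_mod_cast hN)]
        exact_mod_cast h
  rw [ptI, Set.projIcc_of_mem _ hmem]

lemma ptI_zero (N : ℕ) : ptI 0 N = 0 := by
  ext; rw [ptI_coe (Nat.zero_le N)]; simp

lemma ptI_self {N : ℕ} (hN : 0 < N) : ptI N N = 1 := by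
  ext; rw [ptI_coe le_rfl]; rw [div_self (by exact_mod_cast hN.ne')]; rfl

lemma path_apply_mem_of_coe_one {Y : Type*} [TopologicalSpace Y] {x y : Y} (g : Path x y)
    {S : Set Y} (hy : y ∈ S) (z : unitInterval) (hz : (z:ℝ) = 1) : g z ∈ S := by
  have hz1 : z = 1 := Subtype.ext (by rw [hz]; rfl)
  rw [hz1, g.target]
  exact hy

/-- `c` is a fine word for `f` with `N` intervals. -/
def Cov (U : I → Set X) (f : unitInterval → X) (N : ℕ) (c : ℕ → I) : Prop :=
  ∀ i < N, ∀ s : unitInterval, (i:ℝ)/N ≤ (s:ℝ) → (s:ℝ) ≤ ((i:ℝ)+1)/N → f s ∈ U (c i)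

lemma Cov.mem_left {U : I → Set X} {f N c} (h : Cov U f N c) {m : ℕ} (hm : m < N) :
    f (ptI m N) ∈ U (c m) := by
  refine h m hm (ptI m N) (le_of_eq (ptI_coe hm.le).symm) ?_
  rw [ptI_coe hm.le]
  have hN : (0:ℝ) < N := by exact_mod_cast Nat.zero_lt_of_lt hm
  gcongr
  norm_num

lemma Cov.mem_right {U : I → Set X} {f N c} (h : Cov U f N c) {m : ℕ} (hm : m < N) :
    f (ptI (m+1) N) ∈ U (c m) := by
  have h1 : m + 1 ≤ N := hm
  have hN : (0:ℝ) < N := by exact_mod_cast Nat.zero_lt_of_lt hm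
  refine h m hm (ptI (m+1) N) ?_ ?_ <;> rw [ptI_coe h1] <;> push_cast
  · gcongr
    norm_num
  · exact le_rfl

lemma Cov.refine {U : I → Set X} {f N c} (h : Cov U f N c) {k : ℕ} (hk : 0 < k) :
    Cov U f (k*N) (fun i => c (i/k)) := by
  intro i hi s hs1 hs2
  have hN : 0 < N := by
    rcases Nat.eq_zero_or_pos N with rfl | hN
    · simp at hi
    · exact hN
  have hik : i / k < N := by
    rw [Nat.div_lt_iff_lt_mul hk, Nat.mul_comm]; exact hi
  refine h (i/k) hik s ?_ ?_
  · refine le_trans ?_ hs1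
    rw [div_le_div_iff₀ (by exact_mod_cast hN) (by positivity)]
    have : ((i/k : ℕ) : ℝ) * k ≤ (i:ℝ) := by exact_mod_cast Nat.div_mul_le_self i k
    push_cast
    nlinarith [(by exact_mod_cast hN : (0:ℝ) < (N:ℝ))]
  · refine le_trans hs2 ?_
    rw [div_le_div_iff₀ (by positivity) (by exact_mod_cast hN)]
    have : (i:ℝ) + 1 ≤ ((i/k : ℕ) : ℝ) * k + k := by
      have h2 : i + 1 ≤ (i/k + 1) * k := (Nat.div_lt_iff_lt_mul hk).mp (Nat.lt_succ_self (i/k))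
      exact_mod_cast by push_cast at h2 ⊢; nlinarith [h2]
    push_cast
    nlinarith [(by exact_mod_cast hN : (0:ℝ) < (N:ℝ))]

lemma cov_core_data {U : I → Set X} {f N c c'} {a b : I} (hN : 0 < N)
    (h : Cov U f N c) (h' : Cov U f N c')
    (ha : f (ptI 0 N) ∈ U a) (hb : f (ptI N N) ∈ U b) :
    (U a ∩ U (c 0) ∩ U (c' 0)).Nonempty ∧
    (∀ m < N-1, (U (c m) ∩ U (c' m) ∩ (U (c (m+1)) ∩ U (c' (m+1)))).Nonempty) ∧
    (U (c (N-1)) ∩ U (c' (N-1)) ∩ U b).Nonempty := by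
  refine ⟨⟨f (ptI 0 N), ⟨ha, h.mem_left hN⟩, h'.mem_left hN⟩, ?_, ?_⟩
  · intro m hm
    have hm1 : m < N := by omega
    have hm2 : m + 1 < N := by omega
    exact ⟨f (ptI (m+1) N), ⟨⟨h.mem_right hm1, h'.mem_right hm1⟩,
      h.mem_left hm2, h'.mem_left hm2⟩⟩
  · have hlt : N - 1 < N := by omega
    have he : N - 1 + 1 = N := by omega
    refine ⟨f (ptI N N), ⟨?_, ?_⟩, hb⟩
    · have := h.mem_right hlt; rwa [he] at this
    · have := h'.mem_right hlt; rwa [he] at this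

/-- Lebesgue-number grid for a continuous map on the square. -/
lemma exists_grid (U : I → Set X) (hopen : ∀ μ, IsOpen (U μ)) (hcov : ∀ x, ∃ μ, x ∈ U μ)
    (H : C(unitInterval × unitInterval, X)) :
    ∃ N : ℕ, 0 < N ∧ ∃ c : ℕ → ℕ → I, ∀ j < N, ∀ i < N,
      ∀ (t s : unitInterval), ((j:ℝ)/N ≤ (t:ℝ)) → ((t:ℝ) ≤ ((j:ℝ)+1)/N) →
        ((i:ℝ)/N ≤ (s:ℝ)) → ((s:ℝ) ≤ ((i:ℝ)+1)/N) →
          H (t, s) ∈ U (c j i) := by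
  obtain ⟨δ, hδ, hball⟩ := lebesgue_number_lemma_of_metric (s := Set.univ)
    isCompact_univ (c := fun μ => H ⁻¹' (U μ))
    (fun μ => (hopen μ).preimage H.continuous)
    (by intro z _; obtain ⟨μ, hμ⟩ := hcov (H z); exact Set.mem_iUnion.mpr ⟨μ, hμ⟩)
  choose F hF using fun z : unitInterval × unitInterval => hball z trivial
  obtain ⟨N, hN⟩ := exists_nat_one_div_lt hδ
  refine ⟨N + 1, Nat.succ_pos N, fun j i => F (ptI j (N+1), ptI i (N+1)), ?_⟩
  intro j hj i hi t s ht1 ht2 hs1 hs2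
  set M := N + 1
  refine hF (ptI j M, ptI i M) ?_
  have hdt : dist t (ptI j M) < δ := by
    rw [Subtype.dist_eq, Real.dist_eq, ptI_coe hj.le, abs_sub_lt_iff]
    have hM : (0:ℝ) < M := by positivity
    constructor
    · have : (t:ℝ) ≤ ((j:ℝ)+1)/M := ht2
      have h1 : ((j:ℝ)+1)/M - (j:ℝ)/M = 1/M := by field_simp; ring
      have h2 : (1:ℝ)/M < δ := by
        have hMc : ((M:ℕ):ℝ) = (N:ℝ)+1 := by push_cast [M]; ring
        rw [hMc]; exact hN
      linarith
    · have h2 : (1:ℝ)/M < δ := by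
        have hMc : ((M:ℕ):ℝ) = (N:ℝ)+1 := by push_cast [M]; ring
        rw [hMc]; exact hN
      have : (0:ℝ) ≤ (t:ℝ) - (j:ℝ)/M := by linarith
      linarith
  have hds : dist s (ptI i M) < δ := by
    rw [Subtype.dist_eq, Real.dist_eq, ptI_coe hi.le, abs_sub_lt_iff]
    have hM : (0:ℝ) < M := by positivity
    have h2 : (1:ℝ)/M < δ := by
      have hMc : ((M:ℕ):ℝ) = (N:ℝ)+1 := by push_cast [M]; ring
      rw [hMc]; exact hN
    constructor
    · have h1 : ((i:ℝ)+1)/M - (i:ℝ)/M = 1/M := by field_simp; ring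
      linarith
    · linarith
  rw [Metric.mem_ball, Prod.dist_eq]
  exact max_lt hdt hds

/-- Fine word for a single continuous path. -/
lemma exists_word (U : I → Set X) (hopen : ∀ μ, IsOpen (U μ)) (hcov : ∀ x, ∃ μ, x ∈ U μ)
    (f : unitInterval → X) (hf : Continuous f) :
    ∃ (N : ℕ) (c : ℕ → I), 0 < N ∧ Cov U f N c := by
  obtain ⟨N, hN, c, hc⟩ := exists_grid U hopen hcov ⟨fun z => f z.2, by fun_prop⟩
  refine ⟨N, fun i => c 0 i, hN, ?_⟩
  intro i hi s hs1 hs2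
  have h0 : ((0:ℕ):ℝ)/N ≤ ((ptI 0 N : unitInterval):ℝ) := by
    rw [ptI_zero]; simp
  have h0' : ((ptI 0 N : unitInterval):ℝ) ≤ (((0:ℕ):ℝ)+1)/N := by
    rw [ptI_zero]
    have h3 : (0:ℝ) < N := by exact_mod_cast hN
    have : ((0:unitInterval):ℝ) = 0 := rfl
    rw [this]
    positivity
  exact hc 0 hN i hi (ptI 0 N) s h0 h0' hs1 hs2

end topo
end FlatLoctriv
/-- A unitary Čech 1-cocycle subordinate to the open cover `U`, with values in a unital
C*-algebra `A`. -/
def IsUnitaryCechCocycle {X I A : Type*} [TopologicalSpace X] [NormedRing A] [StarRing A]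
    (U : I → Set X) (v : I → I → X → A) : Prop :=
  (∀ μ ν, Continuous (v μ ν)) ∧
  (∀ μ ν, ∀ x ∈ U μ ∩ U ν, v μ ν x ∈ unitary A) ∧
  (∀ μ ν, ∀ x ∈ U μ ∩ U ν, star (v μ ν x) = v ν μ x) ∧
  (∀ μ, ∀ x ∈ U μ, v μ μ x = 1) ∧
  (∀ μ ν σ, ∀ x ∈ U μ ∩ U ν ∩ U σ, v μ ν x * v ν σ x = v μ σ x)

/-- `(ε, U)`-flatness of a Čech 1-cocycle: oscillation less than `ε` on every overlap. -/
def IsFlatCocycle {X I A : Type*} [TopologicalSpace X] [NormedRing A]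
    (ε : ℝ) (U : I → Set X) (v : I → I → X → A) : Prop :=
  ∀ μ ν, ∀ x ∈ U μ ∩ U ν, ∀ y ∈ U μ ∩ U ν, ‖v μ ν x - v μ ν y‖ < ε

/-- A finite good open cover: an open cover all of whose nonempty finite intersections of
members are contractible. -/
def IsGoodCover {X I : Type*} [TopologicalSpace X] (U : I → Set X) : Prop :=
  (∀ μ, IsOpen (U μ)) ∧ (∀ x, ∃ μ, x ∈ U μ) ∧
  ∀ S : Finset I, S.Nonempty → (⋂ μ ∈ S, U μ).Nonempty →
    ContractibleSpace ↥(⋂ μ ∈ S, U μ)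

open FlatLoctriv

set_option maxHeartbeats 1000000

/-- Lemma `lem:loctriv`: on a simply connected space with a finite good
open cover `U`, there is a constant `C₂ > 0` depending only on the cover such that every
`(ε, U)`-flat unitary Čech 1-cocycle (with values in any unital C*-algebra) is `C₂ε`-close
to a trivial one. -/
theorem flat_cocycle_almost_trivial_of_simplyConnected.{u}
    {X I : Type*} [TopologicalSpace X] [SimplyConnectedSpace X] [Finite I]
    (U : I → Set X) (hgood : IsGoodCover U) :
    ∃ C₂ > (0 : ℝ), ∀ ε > (0 : ℝ), ∀ (A : Type u) [CStarAlgebra A],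
      ∀ v : I → I → X → A, IsUnitaryCechCocycle U v → IsFlatCocycle ε U v →
        ∃ u : I → A, (∀ μ, u μ ∈ unitary A) ∧
          ∀ μ ν, ∀ x ∈ U μ ∩ U ν, ‖u μ * star (u ν) - v μ ν x‖ < C₂ * ε := by
  classical
  obtain ⟨hopen, hcovX, hcontr⟩ := hgood
  letI : Fintype I := Fintype.ofFinite I
  have hXne : Nonempty X := PathConnectedSpace.nonempty
  obtain ⟨x₀⟩ := hXne
  obtain ⟨μ₀, hμ₀⟩ := hcovX x₀
  -- choose points in the sets and the overlaps
  have hpE : ∀ μ : I, ∃ y : X, (U μ).Nonempty → y ∈ U μ := by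
    intro μ
    by_cases h : (U μ).Nonempty
    · exact ⟨h.choose, fun _ => h.choose_spec⟩
    · exact ⟨x₀, fun h' => absurd h' h⟩
  choose p hp using hpE
  have hqE : ∀ μ ν : I, ∃ y : X, (U μ ∩ U ν).Nonempty → y ∈ U μ ∩ U ν := by
    intro μ ν
    by_cases h : (U μ ∩ U ν).Nonempty
    · exact ⟨h.choose, fun _ => h.choose_spec⟩
    · exact ⟨x₀, fun h' => absurd h' h⟩
  choose q hq using hqE
  -- paths from the base point and fine words for them
  let γ : (μ : I) → Path x₀ (p μ) := fun μ => PathConnectedSpace.somePath x₀ (p μ)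
  have hwordE : ∀ μ : I, ∃ (N : ℕ) (c : ℕ → I), 0 < N ∧ Cov U (fun s => γ μ s) N c :=
    fun μ => exists_word U hopen hcovX _ (γ μ).continuous
  choose Nw cw hNw hcw using hwordE
  -- the per-edge estimate
  have edge : ∀ μ ν : I, ∃ K : ℝ, 0 ≤ K ∧
      ∀ (ε : ℝ), 0 ≤ ε → ∀ (A : Type u) [CStarAlgebra A], ∀ w : I → I → A,
        (∀ a b, (U a ∩ U b).Nonempty → w a b ∈ unitary A) →
        (∀ a b c', (U a ∩ U b ∩ U c').Nonempty → ‖w a b * w b c' - w a c'‖ ≤ 3*ε) →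
        (∀ a, (U a).Nonempty → w a a = 1) →
        (U μ ∩ U ν).Nonempty →
          ‖cT w μ₀ ν (fun i => if i < 2*Nw μ then cw μ (i/2) else if i < 3*Nw μ then μ else ν)
              (4 * Nw μ - 1)
            - cT w μ₀ ν (cw ν) (Nw ν - 1)‖ ≤ K * ε := by
    intro μ ν
    by_cases hover : (U μ ∩ U ν).Nonempty
    swap
    · exact ⟨0, le_rfl, fun ε hε A _ w _ _ _ h => absurd h hover⟩
    have hUμ : (U μ).Nonempty := ⟨hover.choose, hover.choose_spec.1⟩
    have hUν : (U ν).Nonempty := ⟨hover.choose, hover.choose_spec.2⟩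
    have hpμ : p μ ∈ U μ := hp μ hUμ
    have hpν : p ν ∈ U ν := hp ν hUν
    have hq' : q μ ν ∈ U μ ∩ U ν := hq μ ν hover
    -- contractibility of the pieces
    have hcμ : ContractibleSpace ↥(U μ) := by
      have h1 := hcontr {μ} (Finset.singleton_nonempty μ)
        (by rw [Finset.set_biInter_singleton]; exact hUμ)
      rwa [Finset.set_biInter_singleton] at h1
    have hcν : ContractibleSpace ↥(U ν) := by
      have h1 := hcontr {ν} (Finset.singleton_nonempty ν)
        (by rw [Finset.set_biInter_singleton]; exact hUν)
      rwa [Finset.set_biInter_singleton] at h1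
    -- paths inside U μ and U ν
    obtain ⟨α, hα⟩ : ∃ α : Path (p μ) (q μ ν), ∀ z, α z ∈ U μ := by
      letI := hcμ
      letI : PathConnectedSpace ↥(U μ) := inferInstance
      let sp := PathConnectedSpace.somePath (⟨p μ, hpμ⟩ : ↥(U μ)) ⟨q μ ν, hq'.1⟩
      refine ⟨sp.map continuous_subtype_val, fun z => ?_⟩
      rw [Path.map_coe]
      exact (sp z).2
    obtain ⟨β, hβ⟩ : ∃ β : Path (q μ ν) (p ν), ∀ z, β z ∈ U ν := by
      letI := hcν
      letI : PathConnectedSpace ↥(U ν) := inferInstance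
      let sp := PathConnectedSpace.somePath (⟨q μ ν, hq'.2⟩ : ↥(U ν)) ⟨p ν, hpν⟩
      refine ⟨sp.map continuous_subtype_val, fun z => ?_⟩
      rw [Path.map_coe]
      exact (sp z).2
    set δp : Path x₀ (p ν) := (γ μ).trans (α.trans β) with hδp
    obtain ⟨H⟩ : Path.Homotopic δp (γ ν) := SimplyConnectedSpace.paths_homotopic δp (γ ν)
    obtain ⟨N, hN, c, hc⟩ := exists_grid U hopen hcovX ⟨fun z => H z, H.continuous⟩
    have hNμ := hNw μ
    have hNν := hNw ν
    have hNR : (0:ℝ) < (N:ℝ) := by exact_mod_cast hN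
    -- the word over the composite path
    set ew : ℕ → I := fun i => if i < 2*Nw μ then cw μ (i/2) else if i < 3*Nw μ then μ else ν
      with hewdef
    -- covering of the composite path δp by ew
    have hewcov : Cov U (fun s => δp s) (4 * Nw μ) ew := by
      intro i hi s hs1 hs2
      have hNμR : (0:ℝ) < (Nw μ:ℝ) := by exact_mod_cast hNμ
      have hmesh : ((4*Nw μ : ℕ):ℝ) = 4*(Nw μ:ℝ) := by push_cast; ring
      rw [hmesh] at hs1 hs2
      have hA1 : (i:ℝ) ≤ 4*(Nw μ:ℝ)*(s:ℝ) := by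
        rw [div_le_iff₀ (by positivity)] at hs1; linarith
      have hA2 : 4*(Nw μ:ℝ)*(s:ℝ) ≤ (i:ℝ)+1 := by
        rw [le_div_iff₀ (by positivity)] at hs2; linarith
      show δp s ∈ U (ew i)
      rw [hδp, Path.trans_apply]
      by_cases h1 : i < 2 * Nw μ
      · have hle : (i:ℝ) + 1 ≤ 2*(Nw μ:ℝ) := by exact_mod_cast h1
        have hs_half : (s:ℝ) ≤ 1/2 := by nlinarith
        rw [dif_pos hs_half]
        have hewi : ew i = cw μ (i/2) := by simp only [hewdef, if_pos h1]
        rw [hewi]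
        have hik : i / 2 < Nw μ := by omega
        have f1 : 2*((i/2 : ℕ):ℝ) ≤ (i:ℝ) := by exact_mod_cast (by omega : 2*(i/2) ≤ i)
        have f2 : (i:ℝ) + 1 ≤ 2*((i/2 : ℕ):ℝ) + 2 := by
          exact_mod_cast (by omega : i + 1 ≤ 2*(i/2) + 2)
        refine hcw μ (i/2) hik _ ?_ ?_
        · show ((i/2 : ℕ):ℝ)/(Nw μ:ℝ) ≤ 2*(s:ℝ)
          rw [div_le_iff₀ hNμR]
          nlinarith
        · show 2*(s:ℝ) ≤ (((i/2 : ℕ):ℝ)+1)/(Nw μ:ℝ)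
          rw [le_div_iff₀ hNμR]
          nlinarith
      · have hge : 2*(Nw μ:ℝ) ≤ (i:ℝ) := by exact_mod_cast Nat.le_of_not_lt h1
        have hs_half : 1/2 ≤ (s:ℝ) := by nlinarith
        by_cases h2 : i < 3 * Nw μ
        · have hle3 : (i:ℝ) + 1 ≤ 3*(Nw μ:ℝ) := by exact_mod_cast h2
          have hs34 : (s:ℝ) ≤ 3/4 := by nlinarith
          have hewi : ew i = μ := by simp only [hewdef, if_neg h1, if_pos h2]
          rw [hewi]
          split_ifs with hsh
          · -- s = 1/2 : the point is p μ
            have hcoe : 2*(s:ℝ) = 1 := by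
              have : (s:ℝ) ≤ 1/2 := hsh
              linarith
            exact path_apply_mem_of_coe_one (γ μ) hpμ _ hcoe
          · rw [Path.trans_apply]
            split_ifs with hsh2
            · exact hα _
            · exfalso
              have : ¬ (2*(s:ℝ) - 1 ≤ 1/2) := hsh2
              exact this (by linarith)
        · have hge3 : 3*(Nw μ:ℝ) ≤ (i:ℝ) := by exact_mod_cast Nat.le_of_not_lt h2
          have hs34 : 3/4 ≤ (s:ℝ) := by nlinarith
          have hewi : ew i = ν := by simp only [hewdef, if_neg h1, if_neg h2]
          rw [hewi]
          split_ifs with hsh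
          · exfalso
            have : (s:ℝ) ≤ 1/2 := hsh
            linarith
          · rw [Path.trans_apply]
            split_ifs with hsh2
            · -- s = 3/4 : the point is q μ ν
              have hcoe : 2*(2*(s:ℝ)-1) = 1 := by
                have : 2*(s:ℝ) - 1 ≤ 1/2 := hsh2
                have hs34' : (s:ℝ) ≤ 3/4 := by linarith
                have : (s:ℝ) = 3/4 := le_antisymm hs34' hs34
                rw [this]; ring
              exact path_apply_mem_of_coe_one α hq'.2 _ hcoe
            · exact hβ _
    -- bottom row covers δp, top row covers γ ν
    have hptlb : ∀ m : ℕ, m ≤ N → ((m:ℝ)/N ≤ ((ptI m N : unitInterval):ℝ)) :=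
      fun m hm => le_of_eq (ptI_coe hm).symm
    have hptub : ∀ m : ℕ, m < N → (((ptI m N : unitInterval):ℝ) ≤ ((m:ℝ)+1)/N) := by
      intro m hm
      rw [ptI_coe hm.le]
      gcongr
      norm_num
    have hbot : Cov U (fun s => δp s) N (fun i => c 0 i) := by
      intro i hi s h1 h2
      have h3 := hc 0 hN i hi (ptI 0 N) s (by rw [ptI_zero]; simp) ?_ h1 h2
      · rw [ptI_zero] at h3
        have h4 : H ((0:unitInterval), s) = δp s := H.apply_zero s
        simp only [ContinuousMap.coe_mk] at h3
        rw [h4] at h3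
        exact h3
      · rw [ptI_zero]
        have : ((0:unitInterval):ℝ) = 0 := rfl
        rw [this]
        positivity
    have htop : Cov U (fun s => (γ ν) s) N (fun i => c (N-1) i) := by
      intro i hi s h1 h2
      have hc1 : ((N-1:ℕ):ℝ)/N ≤ ((ptI N N : unitInterval):ℝ) := by
        rw [ptI_self hN]
        have : ((1:unitInterval):ℝ) = 1 := rfl
        rw [this, div_le_one hNR]
        exact_mod_cast Nat.sub_le N 1
      have hc2 : ((ptI N N : unitInterval):ℝ) ≤ (((N-1:ℕ):ℝ)+1)/N := by
        rw [ptI_self hN]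
        have h5 : ((N-1:ℕ):ℝ)+1 = (N:ℝ) := by
          rw [Nat.cast_sub hN]; ring
        have : ((1:unitInterval):ℝ) = 1 := rfl
        rw [this, h5, div_self hNR.ne']
      have h3 := hc (N-1) (by omega) i hi (ptI N N) s hc1 hc2 h1 h2
      have h4 : H ((1:unitInterval), s) = (γ ν) s := H.apply_one s
      simp only [ContinuousMap.coe_mk] at h3
      rw [ptI_self hN, h4] at h3
      exact h3
    -- nonemptiness of the grid sets
    have hrowne : ∀ j < N, ∀ i < N, (U (c j i)).Nonempty := by
      intro j hj i hi
      exact ⟨H (ptI j N, ptI i N),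
        hc j hj i hi (ptI j N) (ptI i N) (hptlb j hj.le) (hptub j hj) (hptlb i hi.le) (hptub i hi)⟩
    -- choose the constant
    refine ⟨(6*((N * (4*Nw μ) - 1 : ℕ):ℝ)+6) + ((N-1:ℕ):ℝ)*(6*((N-1:ℕ):ℝ)+6)
      + (6*((N * Nw ν - 1 : ℕ):ℝ)+6), by positivity, ?_⟩
    intro ε hε A instA w hw1 hw2 hw3 _
    -- `hone` facts
    have honeμw : ∀ j ≤ 4*Nw μ - 1, w (ew j) (ew j) = 1 := by
      intro j hj
      refine hw3 _ ?_
      by_cases hj1 : j < 2*Nw μ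
      · simp only [hewdef, if_pos hj1]
        exact ⟨γ μ (ptI (j/2) (Nw μ)), (hcw μ).mem_left (by omega)⟩
      by_cases hj2 : j < 3*Nw μ
      · simp only [hewdef, if_neg hj1, if_pos hj2]; exact hUμ
      · simp only [hewdef, if_neg hj1, if_neg hj2]; exact hUν
    have honecν : ∀ j ≤ Nw ν - 1, w (cw ν j) (cw ν j) = 1 := by
      intro j hj
      have h0 := hNw ν
      exact hw3 _ ⟨γ ν (ptI j (Nw ν)), (hcw ν).mem_left (by omega)⟩
    have honerow : ∀ j, j < N → ∀ i ≤ N-1, w (c j i) (c j i) = 1 :=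
      fun j hj i hi => hw3 _ (hrowne j hj i (by omega))
    -- Step 1 : ew versus the bottom row
    have step1 : ‖cT w μ₀ ν ew (4*Nw μ - 1) - cT w μ₀ ν (fun i => c 0 i) (N-1)‖
        ≤ (6*((N * (4*Nw μ) - 1 : ℕ):ℝ)+6)*ε := by
      have hMb : 0 < N * (4*Nw μ) := Nat.mul_pos hN (by omega)
      have cov1 : Cov U (fun s => δp s) (N * (4*Nw μ)) (fun i => ew (i/N)) :=
        hewcov.refine hN
      have cov2 : Cov U (fun s => δp s) (N * (4*Nw μ)) (fun i => c 0 (i/(4*Nw μ))) := by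
        have h5 := hbot.refine (k := 4*Nw μ) (by omega)
        rwa [Nat.mul_comm (4*Nw μ) N] at h5
      have ha : δp (ptI 0 (N * (4*Nw μ))) ∈ U μ₀ := by
        rw [ptI_zero, δp.source]; exact hμ₀
      have hb : δp (ptI (N * (4*Nw μ)) (N * (4*Nw μ))) ∈ U ν := by
        rw [ptI_self hMb, δp.target]; exact hpν
      obtain ⟨d0, dmid, d1⟩ := cov_core_data hMb cov1 cov2 ha hb
      have hcore := core ε U w hw1 hw2 μ₀ ν (N * (4*Nw μ) - 1) _ _ d0 dmid d1
      have e1 : cT w μ₀ ν (fun i => ew (i/N)) (N * (4*Nw μ) - 1) = cT w μ₀ ν ew (4*Nw μ - 1) := by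
        have hidx : N * (4*Nw μ) - 1 = N * ((4*Nw μ - 1)+1) - 1 := by
          rw [show (4*Nw μ - 1) + 1 = 4*Nw μ from by omega]
        rw [hidx]
        exact cT_refine w μ₀ ν ew hN honeμw
      have e2 : cT w μ₀ ν (fun i => c 0 (i/(4*Nw μ))) (N * (4*Nw μ) - 1)
          = cT w μ₀ ν (fun i => c 0 i) (N-1) := by
        have hidx : N * (4*Nw μ) - 1 = (4*Nw μ) * ((N-1)+1) - 1 := by
          rw [show (N-1) + 1 = N from by omega, Nat.mul_comm]
        rw [hidx]
        exact cT_refine w μ₀ ν (fun i => c 0 i) (by omega) (honerow 0 hN)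
      rw [e1, e2] at hcore
      exact hcore
    -- Step 2 : telescoping along the rows
    have rowstep : ∀ j, j + 1 < N →
        ‖cT w μ₀ ν (fun i => c j i) (N-1) - cT w μ₀ ν (fun i => c (j+1) i) (N-1)‖
          ≤ (6*((N-1:ℕ):ℝ)+6)*ε := by
      intro j hj
      have hjN : j < N := by omega
      have hcovj : Cov U (fun s => H (ptI (j+1) N, s)) N (fun i => c j i) := by
        intro i hi s h1 h2
        have h3 := hc j hjN i hi (ptI (j+1) N) s ?_ ?_ h1 h2
        · simpa only [ContinuousMap.coe_mk] using h3
        · rw [ptI_coe hj.le]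
          gcongr
          norm_num
        · rw [ptI_coe hj.le]
          push_cast
          exact le_rfl
      have hcovj1 : Cov U (fun s => H (ptI (j+1) N, s)) N (fun i => c (j+1) i) := by
        intro i hi s h1 h2
        have h3 := hc (j+1) hj i hi (ptI (j+1) N) s (hptlb (j+1) hj.le) (hptub (j+1) hj) h1 h2
        simpa only [ContinuousMap.coe_mk] using h3
      have ha : H (ptI (j+1) N, ptI 0 N) ∈ U μ₀ := by
        rw [ptI_zero, H.source]; exact hμ₀
      have hb : H (ptI (j+1) N, ptI N N) ∈ U ν := by
        rw [ptI_self hN, H.target]; exact hpν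
      obtain ⟨d0, dmid, d1⟩ := cov_core_data hN hcovj hcovj1 ha hb
      exact core ε U w hw1 hw2 μ₀ ν (N-1) _ _ d0 dmid d1
    have tele : ∀ j, j < N →
        ‖cT w μ₀ ν (fun i => c 0 i) (N-1) - cT w μ₀ ν (fun i => c j i) (N-1)‖
          ≤ (j:ℝ) * ((6*((N-1:ℕ):ℝ)+6)*ε) := by
      intro j
      induction j with
      | zero => intro _; simp
      | succ j ih =>
          intro hj
          have hj' : j < N := by omega
          have h3 : cT w μ₀ ν (fun i => c 0 i) (N-1) - cT w μ₀ ν (fun i => c (j+1) i) (N-1)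
              = (cT w μ₀ ν (fun i => c 0 i) (N-1) - cT w μ₀ ν (fun i => c j i) (N-1))
                + (cT w μ₀ ν (fun i => c j i) (N-1) - cT w μ₀ ν (fun i => c (j+1) i) (N-1)) := by
            abel
          rw [h3]
          refine le_trans (norm_add_le _ _) ?_
          have h4 := ih hj'
          have h5 := rowstep j hj
          push_cast
          nlinarith [norm_nonneg (cT w μ₀ ν (fun i => c j i) (N-1)
            - cT w μ₀ ν (fun i => c (j+1) i) (N-1))]
    -- Step 3 : top row versus the word of γ ν
    have step3 : ‖cT w μ₀ ν (fun i => c (N-1) i) (N-1) - cT w μ₀ ν (cw ν) (Nw ν - 1)‖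
        ≤ (6*((N * Nw ν - 1 : ℕ):ℝ)+6)*ε := by
      have hMt : 0 < N * Nw ν := Nat.mul_pos hN hNν
      have cov1 : Cov U (fun s => (γ ν) s) (N * Nw ν) (fun i => c (N-1) (i/(Nw ν))) := by
        have h5 := htop.refine (k := Nw ν) hNν
        rwa [Nat.mul_comm (Nw ν) N] at h5
      have cov2 : Cov U (fun s => (γ ν) s) (N * Nw ν) (fun i => cw ν (i/N)) :=
        (hcw ν).refine hN
      have ha : (γ ν) (ptI 0 (N * Nw ν)) ∈ U μ₀ := by
        rw [ptI_zero, (γ ν).source]; exact hμ₀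
      have hb : (γ ν) (ptI (N * Nw ν) (N * Nw ν)) ∈ U ν := by
        rw [ptI_self hMt, (γ ν).target]; exact hpν
      obtain ⟨d0, dmid, d1⟩ := cov_core_data hMt cov1 cov2 ha hb
      have hcore := core ε U w hw1 hw2 μ₀ ν (N * Nw ν - 1) _ _ d0 dmid d1
      have e1 : cT w μ₀ ν (fun i => c (N-1) (i/(Nw ν))) (N * Nw ν - 1)
          = cT w μ₀ ν (fun i => c (N-1) i) (N-1) := by
        have hidx : N * Nw ν - 1 = (Nw ν) * ((N-1)+1) - 1 := by
          rw [show (N-1) + 1 = N from by omega, Nat.mul_comm]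
        rw [hidx]
        exact cT_refine w μ₀ ν (fun i => c (N-1) i) hNν (honerow (N-1) (by omega))
      have e2 : cT w μ₀ ν (fun i => cw ν (i/N)) (N * Nw ν - 1) = cT w μ₀ ν (cw ν) (Nw ν - 1) := by
        have hidx : N * Nw ν - 1 = N * ((Nw ν - 1)+1) - 1 := by
          rw [show (Nw ν - 1) + 1 = Nw ν from by omega]
        rw [hidx]
        exact cT_refine w μ₀ ν (cw ν) hN honecν
      rw [e1, e2] at hcore
      exact hcore
    -- combine the three steps
    have hsplit : cT w μ₀ ν ew (4*Nw μ - 1) - cT w μ₀ ν (cw ν) (Nw ν - 1)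
        = (cT w μ₀ ν ew (4*Nw μ - 1) - cT w μ₀ ν (fun i => c 0 i) (N-1))
          + (cT w μ₀ ν (fun i => c 0 i) (N-1) - cT w μ₀ ν (fun i => c (N-1) i) (N-1))
          + (cT w μ₀ ν (fun i => c (N-1) i) (N-1) - cT w μ₀ ν (cw ν) (Nw ν - 1)) := by
      abel
    rw [hsplit]
    have htel := tele (N-1) (by omega)
    refine le_trans (norm_add₃_le) (le_trans (add_le_add (add_le_add step1 htel) step3)
      (le_of_eq ?_))
    ring
  choose K hK using edge
  have hKnn : ∀ z : I × I, 0 ≤ K z.1 z.2 := fun z => (hK z.1 z.2).1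
  have hsum : (0:ℝ) ≤ ∑ z : I × I, K z.1 z.2 := Finset.sum_nonneg fun z _ => hKnn z
  refine ⟨1 + ∑ z : I × I, K z.1 z.2, by linarith, ?_⟩
  intro ε hε A instA v hco hflat
  obtain ⟨-, hvu, -, hvone, hvcoc⟩ := hco
  set w : I → I → A := fun a b => v a b (q a b) with hwdef
  have hw1 : ∀ a b, (U a ∩ U b).Nonempty → w a b ∈ unitary A := fun a b h => hvu a b _ (hq a b h)
  have hw3 : ∀ a, (U a).Nonempty → w a a = 1 := by
    intro a h
    have h2 : (U a ∩ U a).Nonempty := by rwa [Set.inter_self]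
    exact hvone a _ (hq a a h2).1
  have hflat' : ∀ a b, (U a ∩ U b).Nonempty → ∀ x ∈ U a ∩ U b, ‖w a b - v a b x‖ < ε :=
    fun a b h x hx => hflat a b _ (hq a b h) x hx
  have hw2 : ∀ a b c', (U a ∩ U b ∩ U c').Nonempty → ‖w a b * w b c' - w a c'‖ ≤ 3*ε := by
    rintro a b c' ⟨x, hx⟩
    have hxab : x ∈ U a ∩ U b := hx.1
    have hxbc : x ∈ U b ∩ U c' := ⟨hx.1.2, hx.2⟩
    have hxac : x ∈ U a ∩ U c' := ⟨hx.1.1, hx.2⟩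
    have key : w a b * w b c' - w a c'
        = (w a b - v a b x) * w b c' + v a b x * (w b c' - v b c' x)
          + (v a b x * v b c' x - w a c') := by noncomm_ring
    rw [key]
    have hcoc : v a b x * v b c' x = v a c' x := hvcoc a b c' x hx
    have t1 : ‖(w a b - v a b x) * w b c'‖ ≤ ε := by
      rw [CStarRing.norm_mul_mem_unitary _ (hw1 b c' ⟨x, hxbc⟩)]
      exact (hflat' a b ⟨x,hxab⟩ x hxab).le
    have t2 : ‖v a b x * (w b c' - v b c' x)‖ ≤ ε := by
      rw [CStarRing.norm_mem_unitary_mul _ (hvu a b x hxab)]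
      exact (hflat' b c' ⟨x,hxbc⟩ x hxbc).le
    have t3 : ‖v a b x * v b c' x - w a c'‖ ≤ ε := by
      rw [hcoc, ← norm_neg, neg_sub]
      exact (hflat' a c' ⟨x,hxac⟩ x hxac).le
    refine le_trans norm_add₃_le (by linarith)
  -- the trivializing unitaries
  set t : I → A := fun μ => cT w μ₀ μ (cw μ) (Nw μ - 1) with htdef
  have hwordover : ∀ μ : I, ∀ m, m + 1 < Nw μ → (U (cw μ m) ∩ U (cw μ (m+1))).Nonempty :=
    fun μ m hm => ⟨γ μ (ptI (m+1) (Nw μ)), (hcw μ).mem_right (by omega), (hcw μ).mem_left (by omega)⟩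
  have hcap0 : ∀ μ : I, (U μ₀ ∩ U (cw μ 0)).Nonempty := by
    intro μ
    refine ⟨x₀, hμ₀, ?_⟩
    have h5 := (hcw μ).mem_left (hNw μ)
    rw [ptI_zero] at h5
    simpa using h5
  have hcap1 : ∀ μ : I, (U μ).Nonempty → p μ ∈ U (cw μ (Nw μ - 1)) ∩ U μ := by
    intro μ hμ
    constructor
    · have h0 := hNw μ
      have h5 := (hcw μ).mem_right (show Nw μ - 1 < Nw μ from by omega)
      rw [show Nw μ - 1 + 1 = Nw μ from by omega, ptI_self (hNw μ)] at h5
      simpa using h5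
    · exact hp μ hμ
  have htu : ∀ μ, (U μ).Nonempty → t μ ∈ unitary A := by
    intro μ hμ
    show w μ₀ (cw μ 0) * prodW w (cw μ) (Nw μ - 1) * w (cw μ (Nw μ - 1)) μ ∈ unitary A
    exact mul_mem (mul_mem (hw1 _ _ (hcap0 μ))
        (prodW_mem_unitary w (cw μ) _ fun m hm => hw1 _ _ (hwordover μ m (by omega))))
      (hw1 _ _ ⟨p μ, hcap1 μ hμ⟩)
  refine ⟨fun μ => if h : (U μ).Nonempty then star (t μ) else 1, ?_, ?_⟩
  · intro μ
    by_cases h : (U μ).Nonempty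
    · simp only [dif_pos h]; exact Unitary.star_mem (htu μ h)
    · simp only [dif_neg h]; exact one_mem _
  · intro μ ν x hx
    have hover : (U μ ∩ U ν).Nonempty := ⟨x, hx⟩
    have hUμ : (U μ).Nonempty := ⟨x, hx.1⟩
    have hUν : (U ν).Nonempty := ⟨x, hx.2⟩
    simp only [dif_pos hUμ, dif_pos hUν, star_star]
    have hedge := (hK μ ν).2 ε hε.le A w hw1 hw2 hw3 hover
    have honeμw : ∀ j ≤ Nw μ - 1, w (cw μ j) (cw μ j) = 1 := by
      intro j hj
      have h0 := hNw μ
      exact hw3 _ ⟨γ μ (ptI j (Nw μ)), (hcw μ).mem_left (by omega)⟩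
    have heq : cT w μ₀ ν
        (fun i => if i < 2*Nw μ then cw μ (i/2) else if i < 3*Nw μ then μ else ν) (4*Nw μ - 1)
          = t μ * w μ ν :=
      cT_eword w μ₀ μ ν (cw μ) (hNw μ) honeμw (hw3 μ hUμ) (hw3 ν hUν)
    rw [heq] at hedge
    have hst : star (t μ) * t ν - w μ ν = star (t μ) * (t ν - t μ * w μ ν) := by
      have h1 : star (t μ) * t μ = 1 := (Unitary.mem_iff.mp (htu μ hUμ)).1
      rw [mul_sub, ← mul_assoc, h1, one_mul]
    have hterm1 : ‖star (t μ) * t ν - w μ ν‖ ≤ K μ ν * ε := by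
      rw [hst, CStarRing.norm_mem_unitary_mul _ (Unitary.star_mem (htu μ hUμ)), norm_sub_rev]
      exact hedge
    have hterm2 : ‖w μ ν - v μ ν x‖ < ε := hflat μ ν (q μ ν) (hq μ ν hover) x hx
    have hKle : K μ ν ≤ ∑ z : I × I, K z.1 z.2 :=
      Finset.single_le_sum (f := fun z : I × I => K z.1 z.2) (fun z _ => hKnn z)
        (Finset.mem_univ (μ, ν))
    have hsplit2 : star (t μ) * t ν - v μ ν x
        = (star (t μ) * t ν - w μ ν) + (w μ ν - v μ ν x) := by abel
    calc ‖star (t μ) * t ν - v μ ν x‖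
        ≤ ‖star (t μ) * t ν - w μ ν‖ + ‖w μ ν - v μ ν x‖ := by
          rw [hsplit2]; exact norm_add_le _ _
      _ < K μ ν * ε + ε := add_lt_add_of_le_of_lt hterm1 hterm2
      _ ≤ (1 + ∑ z : I × I, K z.1 z.2) * ε := by nlinarith
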